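/- Let (Ω,F,P) be a complete probability space and let C be a closed, convex, bounded-in-probability subset of L0+. Then for every net (x_α)_{α∈A} in C there exists a subnet of convex combinations (y_β)_{β∈B} of (x_α) converging in probability to some y ∈ C. -/

import Mathlib

open scoped ENNReal Topology


open MeasureTheory Filter

/-- The set `L0+`: (versions of) nonnegative real-valued random variables. -/
def L0plus {Ω : Type*} [MeasurableSpace Ω] (μ : Measure Ω) : Set (Ω → ℝ) :=
  {f | Measurable f ∧ ∀ᵐ ω ∂μ, 0 ≤ f ω}

/-- A set of random variables is *bounded in probability* if
`sup_{f ∈ C} P[|f| ≥ M] → 0` as `M → ∞`. -/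
def BoundedInProbability {Ω : Type*} [MeasurableSpace Ω] (μ : Measure Ω)
    (C : Set (Ω → ℝ)) : Prop :=
  Tendsto (fun M : ℝ => ⨆ f ∈ C, μ {ω | M ≤ |f ω|}) atTop (nhds 0)

/-- A set of random variables is *closed in probability* (closed for the metrizable
topology of convergence in measure) if it contains every limit in measure of a
sequence of its elements. -/
def ClosedInMeasure {Ω : Type*} [MeasurableSpace Ω] (μ : Measure Ω)
    (C : Set (Ω → ℝ)) : Prop :=
  ∀ (f : ℕ → Ω → ℝ) (g : Ω → ℝ), (∀ n, f n ∈ C) →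
    TendstoInMeasure μ f atTop g → g ∈ C

/-- A convex set `C` of random variables is *convexly compact* (for the topology of
convergence in probability) if every family of closed (in probability) and convex
subsets of `C`, indexed by a nonempty set, with the finite-intersection property has
nonempty total intersection. -/
def ConvexlyCompactInMeasure {Ω : Type*} [MeasurableSpace Ω] (μ : Measure Ω)
    (C : Set (Ω → ℝ)) : Prop :=
  Convex ℝ C ∧
    ∀ (A : Type) (_ : Nonempty A) (F : A → Set (Ω → ℝ)),
      (∀ α, ClosedInMeasure μ (F α)) → (∀ α, Convex ℝ (F α)) → (∀ α, F α ⊆ C) →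
      (∀ D : Finset A, D.Nonempty → (⋂ α ∈ D, F α).Nonempty) →
      (⋂ α, F α).Nonempty

/-- A net `y : B → X` is a *subnet of convex combinations* of the net `x : A → X`
if there is a map `D` assigning to each `β ∈ B` a nonempty finite subset of `A` such that
(1) `y β` lies in the convex hull of `{x α : α ∈ D β}`, and
(2) for each `α ∈ A` there is `β ∈ B` with `α' ⪰ α` for every `α' ∈ ⋃_{β' ⪰ β} D β'`. -/
def SubnetOfConvexCombinations {X : Type*} [AddCommGroup X] [Module ℝ X]
    {A B : Type*} [Preorder A] [Preorder B] (x : A → X) (y : B → X) : Prop :=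
  ∃ D : B → Finset A,
    (∀ β, (D β).Nonempty) ∧
    (∀ β, y β ∈ convexHull ℝ (x '' ↑(D β))) ∧
    (∀ α : A, ∃ β : B, ∀ β' : B, β ≤ β' → ∀ α' ∈ D β', α ≤ α')

namespace KomlosAux

noncomputable def uu (t : ℝ) : ℝ := 1 - Real.exp (-(max t 0))

lemma uu_nonneg (t : ℝ) : 0 ≤ uu t := by
  have h : Real.exp (-(max t 0)) ≤ 1 := by
    rw [Real.exp_le_one_iff]
    simp [le_max_iff]
  simp only [uu]; linarith

lemma uu_le_one (t : ℝ) : uu t ≤ 1 := by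
  have := Real.exp_pos (-(max t 0))
  simp only [uu]; linarith

lemma uu_continuous : Continuous uu := by
  unfold uu
  fun_prop

lemma uu_eq {t : ℝ} (ht : 0 ≤ t) : uu t = 1 - Real.exp (-t) := by
  simp [uu, max_eq_left ht]

lemma uu_gap {a b : ℝ} (ha : 0 ≤ a) (hb : 0 ≤ b) :
    uu ((a + b) / 2) - (uu a + uu b) / 2
      = (Real.exp (-(a / 2)) - Real.exp (-(b / 2))) ^ 2 / 2 := by
  rw [uu_eq ha, uu_eq hb, uu_eq (by linarith)]
  have h1 : Real.exp (-((a + b) / 2)) = Real.exp (-(a / 2)) * Real.exp (-(b / 2)) := by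
    rw [← Real.exp_add]; ring_nf
  have h2 : Real.exp (-a) = Real.exp (-(a / 2)) ^ 2 := by
    rw [sq, ← Real.exp_add]; ring_nf
  have h3 : Real.exp (-b) = Real.exp (-(b / 2)) ^ 2 := by
    rw [sq, ← Real.exp_add]; ring_nf
  rw [h1, h2, h3]; ring

lemma uu_gap_lb_aux {M η a b : ℝ} (ha : 0 ≤ a) (haM : a ≤ M) (hbM : b ≤ M)
    (hab : a + η ≤ b) (hη : 0 < η) :
    Real.exp (-M) * (1 - Real.exp (-(η / 2))) ^ 2 / 2
      ≤ (Real.exp (-(a / 2)) - Real.exp (-(b / 2))) ^ 2 / 2 := by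
  have h1 : Real.exp (-(a / 2)) - Real.exp (-(b / 2))
      = Real.exp (-(a / 2)) * (1 - Real.exp (-((b - a) / 2))) := by
    rw [mul_sub, mul_one, ← Real.exp_add]; ring_nf
  have h2 : Real.exp (-(M / 2)) ≤ Real.exp (-(a / 2)) := by
    apply Real.exp_le_exp.2; linarith
  have h3 : Real.exp (-((b - a) / 2)) ≤ Real.exp (-(η / 2)) := by
    apply Real.exp_le_exp.2; linarith
  have h4 : Real.exp (-(η / 2)) < 1 := by
    rw [Real.exp_lt_one_iff]; linarith
  have h5 : (0:ℝ) < 1 - Real.exp (-(η / 2)) := by linarith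
  have h6 : Real.exp (-(M / 2)) * (1 - Real.exp (-(η / 2)))
      ≤ Real.exp (-(a / 2)) * (1 - Real.exp (-((b - a) / 2))) := by
    apply mul_le_mul h2 (by linarith) (by linarith) (Real.exp_pos _).le
  have h7 : Real.exp (-(M / 2)) ^ 2 = Real.exp (-M) := by
    rw [sq, ← Real.exp_add]; ring_nf
  have h8 : (0:ℝ) ≤ Real.exp (-(M / 2)) * (1 - Real.exp (-(η / 2))) :=
    mul_nonneg (Real.exp_pos _).le h5.le
  rw [h1]
  have h9 : (Real.exp (-(M / 2)) * (1 - Real.exp (-(η / 2)))) ^ 2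
      ≤ (Real.exp (-(a / 2)) * (1 - Real.exp (-((b - a) / 2)))) ^ 2 := by
    apply pow_le_pow_left₀ h8 h6
  rw [mul_pow, h7] at h9
  linarith

lemma uu_gap_lb {M η a b : ℝ} (ha : 0 ≤ a) (hb : 0 ≤ b) (haM : a ≤ M) (hbM : b ≤ M)
    (hab : η ≤ |a - b|) (hη : 0 < η) :
    Real.exp (-M) * (1 - Real.exp (-(η / 2))) ^ 2 / 2
      ≤ uu ((a + b) / 2) - (uu a + uu b) / 2 := by
  rw [uu_gap ha hb]
  rcases abs_cases (a - b) with ⟨h, _⟩ | ⟨h, _⟩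
  · -- a - b = |a - b| ≥ η, so b + η ≤ a
    have : (Real.exp (-(a / 2)) - Real.exp (-(b / 2))) ^ 2
        = (Real.exp (-(b / 2)) - Real.exp (-(a / 2))) ^ 2 := by ring
    rw [this]
    exact uu_gap_lb_aux hb hbM haM (by rw [h] at hab; linarith) hη
  · exact uu_gap_lb_aux ha haM hbM (by rw [h] at hab; linarith) hη

lemma uu_gap_nonneg {a b : ℝ} (ha : 0 ≤ a) (hb : 0 ≤ b) :
    0 ≤ uu ((a + b) / 2) - (uu a + uu b) / 2 := by
  rw [uu_gap ha hb]; positivity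

variable {Ω : Type*} [MeasurableSpace Ω] (μ : Measure Ω)

lemma uu_integrable [IsFiniteMeasure μ] {g : Ω → ℝ} (hg : Measurable g) :
    Integrable (fun ω => uu (g ω)) μ := by
  refine (integrable_const (1:ℝ)).mono' ?_ ?_
  · exact (uu_continuous.measurable.comp hg).aestronglyMeasurable
  · refine Eventually.of_forall fun ω => ?_
    rw [Real.norm_eq_abs, abs_le]
    exact ⟨by linarith [uu_nonneg (g ω)], uu_le_one _⟩

noncomputable def II (g : Ω → ℝ) : ℝ := ∫ ω, uu (g ω) ∂μ

lemma II_nonneg (g : Ω → ℝ) : 0 ≤ II μ g :=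
  integral_nonneg fun ω => uu_nonneg _

lemma II_le_one [IsProbabilityMeasure μ] {g : Ω → ℝ} (hg : Measurable g) : II μ g ≤ 1 := by
  have : II μ g ≤ ∫ _ω, (1:ℝ) ∂μ :=
    integral_mono (uu_integrable μ hg) (integrable_const _) fun ω => uu_le_one _
  simpa using this

/-- metric-type closure for convergence in probability -/
def mclosure (S : Set (Ω → ℝ)) : Set (Ω → ℝ) :=
  {g | ∀ ε : ℝ, 0 < ε → ∃ h ∈ S, μ {ω | ε ≤ |g ω - h ω|} ≤ ENNReal.ofReal ε}

lemma abs_split₂ (f g h : Ω → ℝ) (e1 e2 : ℝ) :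
    {ω | e1 + e2 ≤ |f ω - h ω|}
      ⊆ {ω | e1 ≤ |f ω - g ω|} ∪ {ω | e2 ≤ |g ω - h ω|} := by
  intro ω hω
  simp only [Set.mem_setOf_eq] at hω
  by_contra hc
  simp only [Set.mem_union, Set.mem_setOf_eq, not_or, not_le] at hc
  have := abs_sub (f ω - g ω) (h ω - g ω)
  have h3 : |f ω - h ω| ≤ |f ω - g ω| + |g ω - h ω| := abs_sub_le _ _ _
  linarith [hc.1, hc.2]

lemma subset_mclosure (S : Set (Ω → ℝ)) : S ⊆ mclosure μ S := by
  intro g hg ε hε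
  refine ⟨g, hg, ?_⟩
  have h0 : {ω | ε ≤ |g ω - g ω|} = ∅ := by
    ext ω; simp only [sub_self, abs_zero, Set.mem_setOf_eq, Set.mem_empty_iff_false, iff_false]
    exact hε.not_ge
  rw [h0]; simp

lemma mclosure_mono {S T : Set (Ω → ℝ)} (hST : S ⊆ T) : mclosure μ S ⊆ mclosure μ T := by
  intro g hg ε hε
  obtain ⟨h, hh, hb⟩ := hg ε hε
  exact ⟨h, hST hh, hb⟩

lemma mclosure_convex {S : Set (Ω → ℝ)} (hS : Convex ℝ S) : Convex ℝ (mclosure μ S) := by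
  intro g hg g' hg' s t hs ht hst
  intro ε hε
  obtain ⟨h, hh, hb⟩ := hg (ε/2) (by linarith)
  obtain ⟨h', hh', hb'⟩ := hg' (ε/2) (by linarith)
  refine ⟨s • h + t • h', hS hh hh' hs ht hst, ?_⟩
  have hsub : {ω | ε ≤ |(s • g + t • g') ω - (s • h + t • h') ω|}
      ⊆ {ω | ε/2 ≤ |g ω - h ω|} ∪ {ω | ε/2 ≤ |g' ω - h' ω|} := by
    intro ω hω
    simp only [Set.mem_setOf_eq, Pi.add_apply, Pi.smul_apply, smul_eq_mul] at hω
    by_contra hc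
    simp only [Set.mem_union, Set.mem_setOf_eq, not_or, not_le] at hc
    have e1 : |s * g ω + t * g' ω - (s * h ω + t * h' ω)|
        = |s * (g ω - h ω) + t * (g' ω - h' ω)| := by ring_nf
    have e2 : |s * (g ω - h ω) + t * (g' ω - h' ω)|
        ≤ s * |g ω - h ω| + t * |g' ω - h' ω| := by
      calc |s * (g ω - h ω) + t * (g' ω - h' ω)|
          ≤ |s * (g ω - h ω)| + |t * (g' ω - h' ω)| := abs_add_le _ _
        _ = s * |g ω - h ω| + t * |g' ω - h' ω| := by
            rw [abs_mul, abs_mul, abs_of_nonneg hs, abs_of_nonneg ht]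
    have e3 : s * |g ω - h ω| ≤ s * (ε/2) := by
      apply mul_le_mul_of_nonneg_left hc.1.le hs
    have e4 : t * |g' ω - h' ω| ≤ t * (ε/2) := by
      apply mul_le_mul_of_nonneg_left hc.2.le ht
    have e5 : s * (ε/2) + t * (ε/2) = ε/2 := by
      have : s + t = 1 := hst
      nlinarith
    -- strict somewhere? We have ≤ ε/2 < ε, contradiction with ε ≤ ...
    rw [e1] at hω
    have : ε ≤ ε/2 := le_trans hω (by linarith)
    linarith
  calc μ {ω | ε ≤ |(s • g + t • g') ω - (s • h + t • h') ω|}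
      ≤ μ ({ω | ε/2 ≤ |g ω - h ω|} ∪ {ω | ε/2 ≤ |g' ω - h' ω|}) := measure_mono hsub
    _ ≤ μ {ω | ε/2 ≤ |g ω - h ω|} + μ {ω | ε/2 ≤ |g' ω - h' ω|} := measure_union_le _ _
    _ ≤ ENNReal.ofReal (ε/2) + ENNReal.ofReal (ε/2) := add_le_add hb hb'
    _ = ENNReal.ofReal ε := by
        rw [← ENNReal.ofReal_add (by linarith) (by linarith)]; norm_num


variable {A : Type} [Preorder A]


variable {A : Type} [Preorder A]

def FF (C : Set (Ω → ℝ)) (x : A → Ω → ℝ) (α : A) : Set (Ω → ℝ) :=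
  C ∩ mclosure μ (convexHull ℝ (x '' {α' | α ≤ α'}))

lemma FF_subset_C (C : Set (Ω → ℝ)) (x : A → Ω → ℝ) (α : A) : FF μ C x α ⊆ C :=
  Set.inter_subset_left

lemma mem_FF_self {C : Set (Ω → ℝ)} {x : A → Ω → ℝ} (hx : ∀ α, x α ∈ C) (α : A) :
    x α ∈ FF μ C x α :=
  ⟨hx α, subset_mclosure μ _ (subset_convexHull ℝ _ ⟨α, le_refl α, rfl⟩)⟩

lemma FF_antitone (C : Set (Ω → ℝ)) (x : A → Ω → ℝ) {α α' : A} (h : α ≤ α') :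
    FF μ C x α' ⊆ FF μ C x α :=
  Set.inter_subset_inter_right _ <| mclosure_mono μ <| convexHull_mono <|
    Set.image_mono fun _ hb => le_trans h hb

lemma FF_convex {C : Set (Ω → ℝ)} (hconv : Convex ℝ C) (x : A → Ω → ℝ) (α : A) :
    Convex ℝ (FF μ C x α) :=
  hconv.inter (mclosure_convex μ (convex_convexHull ℝ _))

noncomputable def cA (C : Set (Ω → ℝ)) (x : A → Ω → ℝ) (α : A) : ℝ :=
  sSup (II μ '' FF μ C x α)

lemma cA_bddAbove [IsProbabilityMeasure μ] {C : Set (Ω → ℝ)} (hsub : C ⊆ L0plus μ)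
    (x : A → Ω → ℝ) (α : A) : BddAbove (II μ '' FF μ C x α) := by
  refine ⟨1, fun v hv => ?_⟩
  obtain ⟨g, hg, rfl⟩ := hv
  exact II_le_one μ (hsub (hg.1)).1

lemma le_cA [IsProbabilityMeasure μ] {C : Set (Ω → ℝ)} (hsub : C ⊆ L0plus μ)
    {x : A → Ω → ℝ} {α : A} {g : Ω → ℝ} (hg : g ∈ FF μ C x α) : II μ g ≤ cA μ C x α :=
  le_csSup (cA_bddAbove μ hsub x α) (Set.mem_image_of_mem _ hg)

lemma cA_nonneg [IsProbabilityMeasure μ] {C : Set (Ω → ℝ)} (hsub : C ⊆ L0plus μ)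
    {x : A → Ω → ℝ} (hx : ∀ α, x α ∈ C) (α : A) : 0 ≤ cA μ C x α :=
  le_trans (II_nonneg μ (x α)) (le_cA μ hsub (mem_FF_self μ hx α))

noncomputable def cI (C : Set (Ω → ℝ)) (x : A → Ω → ℝ) : ℝ := ⨅ α, cA μ C x α

lemma cI_le_cA [IsProbabilityMeasure μ] [Nonempty A] {C : Set (Ω → ℝ)}
    (hsub : C ⊆ L0plus μ) {x : A → Ω → ℝ} (hx : ∀ α, x α ∈ C) (α : A) :
    cI μ C x ≤ cA μ C x α :=
  ciInf_le ⟨0, fun v ⟨α', hα'⟩ => hα' ▸ cA_nonneg μ hsub hx α'⟩ α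

lemma exists_cA_lt [IsProbabilityMeasure μ] [Nonempty A] {C : Set (Ω → ℝ)}
    (hsub : C ⊆ L0plus μ) {x : A → Ω → ℝ} (hx : ∀ α, x α ∈ C) {ε : ℝ} (hε : 0 < ε) :
    ∃ α₀, cA μ C x α₀ < cI μ C x + ε := by
  have h : cI μ C x < cI μ C x + ε := by linarith
  exact exists_lt_of_ciInf_lt h

/-- The key Cauchy-type estimate. -/
lemma key_estimate [IsProbabilityMeasure μ] [Nonempty A] [IsDirected A (· ≤ ·)]
    {C : Set (Ω → ℝ)} (hsub : C ⊆ L0plus μ) (hconv : Convex ℝ C)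
    (hbd : BoundedInProbability μ C)
    {x : A → Ω → ℝ} (hx : ∀ α, x α ∈ C)
    {f : A → ℕ → Ω → ℝ} (hf1 : ∀ α n, f α n ∈ FF μ C x α)
    (hf2 : ∀ α n, cA μ C x α - 1/(n+1) < II μ (f α n))
    {η : ℝ} (hη : 0 < η) :
    ∃ (α₀ : A) (N : ℕ), ∀ α α', α₀ ≤ α → α₀ ≤ α' → ∀ n n', N ≤ n → N ≤ n' →
      μ {ω | η ≤ |f α n ω - f α' n' ω|} ≤ ENNReal.ofReal η := by
  -- tail bound
  have h4pos : (0:ℝ≥0∞) < ENNReal.ofReal (η/4) := ENNReal.ofReal_pos.2 (by linarith)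
  obtain ⟨M, hM⟩ := (hbd.eventually_lt_const h4pos).exists_forall_of_atTop
  have htail : ∀ g ∈ C, μ {ω | M ≤ |g ω|} ≤ ENNReal.ofReal (η/4) := by
    intro g hg
    have h1 : μ {ω | M ≤ |g ω|} ≤ ⨆ f ∈ C, μ {ω | M ≤ |f ω|} := by
      exact le_biSup (fun f => μ {ω | M ≤ |f ω|}) hg
    exact le_trans h1 (hM M le_rfl).le
  set κ : ℝ := Real.exp (-M) * (1 - Real.exp (-(η / 2))) ^ 2 / 2 with hκdef
  have hκ : 0 < κ := by
    have h1 : Real.exp (-(η / 2)) < 1 := by rw [Real.exp_lt_one_iff]; linarith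
    have h2 := Real.exp_pos (-M)
    have h3 : (0:ℝ) < (1 - Real.exp (-(η / 2))) ^ 2 := pow_pos (by linarith) 2
    rw [hκdef]
    exact div_pos (mul_pos h2 h3) (by norm_num)
  set εr : ℝ := κ * η / 4 with hεrdef
  have hεr : 0 < εr := by positivity
  obtain ⟨α₀, hα₀⟩ := exists_cA_lt μ hsub hx hεr
  obtain ⟨N, hN⟩ := exists_nat_one_div_lt (show (0:ℝ) < κ * η / 4 by positivity)
  refine ⟨α₀, N, fun α α' hα hα' n n' hn hn' => ?_⟩
  set g1 := f α n with hg1def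
  set g2 := f α' n' with hg2def
  have hg1F : g1 ∈ FF μ C x α₀ := FF_antitone μ C x hα (hf1 α n)
  have hg2F : g2 ∈ FF μ C x α₀ := FF_antitone μ C x hα' (hf1 α' n')
  have hg1C : g1 ∈ C := hg1F.1
  have hg2C : g2 ∈ C := hg2F.1
  have meas1 : Measurable g1 := (hsub hg1C).1
  have meas2 : Measurable g2 := (hsub hg2C).1
  have pos1 : ∀ᵐ ω ∂μ, 0 ≤ g1 ω := (hsub hg1C).2
  have pos2 : ∀ᵐ ω ∂μ, 0 ≤ g2 ω := (hsub hg2C).2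
  -- midpoint
  set mid : Ω → ℝ := (1/2 : ℝ) • g1 + (1/2 : ℝ) • g2 with hmiddef
  have hmidF : mid ∈ FF μ C x α₀ :=
    FF_convex μ hconv x α₀ hg1F hg2F (by norm_num) (by norm_num) (by norm_num)
  have hmid_pt : ∀ ω, mid ω = (g1 ω + g2 ω) / 2 := by
    intro ω; simp [hmiddef]; ring
  have measmid : Measurable mid := by
    have : mid = fun ω => (g1 ω + g2 ω) / 2 := funext hmid_pt
    rw [this]; exact (meas1.add meas2).div_const 2
  -- upper bound on the gap integral
  have hImid : II μ mid ≤ cA μ C x α₀ := le_cA μ hsub hmidF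
  have hI1 : cI μ C x - 1/(N+1) < II μ g1 := by
    have h1 := hf2 α n
    have h2 : cI μ C x ≤ cA μ C x α := cI_le_cA μ hsub hx α
    have h3 : 1/((n:ℝ)+1) ≤ 1/((N:ℝ)+1) := by
      apply one_div_le_one_div_of_le (by positivity)
      have := (Nat.cast_le (α := ℝ)).2 hn
      linarith
    linarith
  have hI2 : cI μ C x - 1/(N+1) < II μ g2 := by
    have h1 := hf2 α' n'
    have h2 : cI μ C x ≤ cA μ C x α' := cI_le_cA μ hsub hx α'
    have h3 : 1/((n':ℝ)+1) ≤ 1/((N:ℝ)+1) := by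
      apply one_div_le_one_div_of_le (by positivity)
      have := (Nat.cast_le (α := ℝ)).2 hn'
      linarith
    linarith
  have hgapI : II μ mid - (II μ g1 + II μ g2)/2 ≤ κ * η / 2 := by
    have h1 : II μ mid < cI μ C x + εr := lt_of_le_of_lt hImid hα₀
    have h2 : 1/((N:ℝ)+1) < κ * η / 4 := hN
    rw [hεrdef] at h1
    linarith
  -- the good set
  set G : Set Ω := {ω | η ≤ |g1 ω - g2 ω|} ∩ {ω | |g1 ω| ≤ M} ∩ {ω | |g2 ω| ≤ M} with hGdef
  have hGmeas : MeasurableSet G := by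
    refine (MeasurableSet.inter ?_ ?_).inter ?_
    · exact measurableSet_le measurable_const (meas1.sub meas2).abs
    · exact measurableSet_le meas1.abs measurable_const
    · exact measurableSet_le meas2.abs measurable_const
  -- pointwise bound
  have hpt : ∀ᵐ ω ∂μ, G.indicator (fun _ => κ) ω
      ≤ uu (mid ω) - (uu (g1 ω) + uu (g2 ω))/2 := by
    filter_upwards [pos1, pos2] with ω h1 h2
    rw [hmid_pt ω]
    by_cases hωG : ω ∈ G
    · rw [Set.indicator_of_mem hωG]
      obtain ⟨⟨hab, haM⟩, hbM⟩ := hωG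
      exact uu_gap_lb h1 h2 (le_trans (le_abs_self _) haM) (le_trans (le_abs_self _) hbM)
        hab hη
    · rw [Set.indicator_of_notMem hωG]
      exact uu_gap_nonneg h1 h2
  -- integrate
  have hint_ind : Integrable (G.indicator (fun _ => κ)) μ :=
    (integrable_const κ).indicator hGmeas
  have hi12 : Integrable (fun ω => (uu (g1 ω) + uu (g2 ω))/2) μ := by
    exact ((uu_integrable μ meas1).add (uu_integrable μ meas2)).div_const 2
  have hint_gap : Integrable (fun ω => uu (mid ω) - (uu (g1 ω) + uu (g2 ω))/2) μ := by
    exact (uu_integrable μ measmid).sub hi12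
  have hIG : κ * (μ G).toReal ≤ II μ mid - (II μ g1 + II μ g2)/2 := by
    have h1 := integral_mono_ae hint_ind hint_gap hpt
    rw [integral_indicator_const κ hGmeas] at h1
    rw [smul_eq_mul, mul_comm] at h1
    have h2 : ∫ ω, (uu (mid ω) - (uu (g1 ω) + uu (g2 ω))/2) ∂μ
        = II μ mid - (II μ g1 + II μ g2)/2 := by
      rw [integral_sub (uu_integrable μ measmid) hi12]
      rw [integral_div, integral_add (uu_integrable μ meas1) (uu_integrable μ meas2)]
      rfl
    rw [h2] at h1
    exact h1
  have hμG : μ G ≤ ENNReal.ofReal (η/2) := by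
    rw [ENNReal.le_ofReal_iff_toReal_le (measure_ne_top μ G) (by linarith)]
    have h1 : κ * (μ G).toReal ≤ κ * (η/2) := by
      calc κ * (μ G).toReal ≤ II μ mid - (II μ g1 + II μ g2)/2 := hIG
        _ ≤ κ * η / 2 := hgapI
        _ = κ * (η/2) := by ring
    exact le_of_mul_le_mul_left h1 hκ
  -- combine
  have hsubset : {ω | η ≤ |g1 ω - g2 ω|}
      ⊆ G ∪ {ω | M ≤ |g1 ω|} ∪ {ω | M ≤ |g2 ω|} := by
    intro ω hω
    by_cases h1 : M ≤ |g1 ω|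
    · exact Or.inl (Or.inr h1)
    · by_cases h2 : M ≤ |g2 ω|
      · exact Or.inr h2
      · exact Or.inl (Or.inl ⟨⟨hω, (not_le.1 h1).le⟩, (not_le.1 h2).le⟩)
  calc μ {ω | η ≤ |g1 ω - g2 ω|}
      ≤ μ (G ∪ {ω | M ≤ |g1 ω|} ∪ {ω | M ≤ |g2 ω|}) := measure_mono hsubset
    _ ≤ μ (G ∪ {ω | M ≤ |g1 ω|}) + μ {ω | M ≤ |g2 ω|} := measure_union_le _ _
    _ ≤ μ G + μ {ω | M ≤ |g1 ω|} + μ {ω | M ≤ |g2 ω|} :=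
        add_le_add (measure_union_le _ _) le_rfl
    _ ≤ ENNReal.ofReal (η/2) + ENNReal.ofReal (η/4) + ENNReal.ofReal (η/4) :=
        add_le_add (add_le_add hμG (htail g1 hg1C)) (htail g2 hg2C)
    _ = ENNReal.ofReal η := by
        rw [← ENNReal.ofReal_add (by linarith) (by linarith),
          ← ENNReal.ofReal_add (by linarith) (by linarith)]
        norm_num
        congr 1
        ring




lemma mem_convexHull_finset {E ι : Type*} [AddCommGroup E] [Module ℝ E] [Nonempty ι]
    {s : Set ι} {x : ι → E} {w : E} (hw : w ∈ convexHull ℝ (x '' s)) :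
    ∃ D : Finset ι, D.Nonempty ∧ ↑D ⊆ s ∧ w ∈ convexHull ℝ (x '' ↑D) := by
  rw [convexHull_eq] at hw
  obtain ⟨ι', t, wt, zt, h0, h1, hmem, hcm⟩ := hw
  have haa : ∀ i ∈ t, ∃ a, a ∈ s ∧ x a = zt i := by
    intro i hi
    obtain ⟨a, ha, hxa⟩ := hmem i hi
    exact ⟨a, ha, hxa⟩
  classical
  set aa : ι' → ι := fun i =>
    if h : ∃ a, a ∈ s ∧ x a = zt i then h.choose else Classical.arbitrary ι with haadef
  have haa2 : ∀ i ∈ t, aa i ∈ s ∧ x (aa i) = zt i := by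
    intro i hi
    have hex := haa i hi
    simp only [haadef, dif_pos hex]
    exact hex.choose_spec
  have htne : t.Nonempty := by
    rw [Finset.nonempty_iff_ne_empty]
    intro h
    rw [h, Finset.sum_empty] at h1
    exact one_ne_zero h1.symm
  refine ⟨t.image aa, Finset.image_nonempty.2 htne, ?_, ?_⟩
  · intro a ha
    rw [Finset.coe_image] at ha
    obtain ⟨i, hi, rfl⟩ := ha
    exact (haa2 i (Finset.mem_coe.1 hi)).1
  · rw [← hcm]
    refine Finset.centerMass_mem_convexHull t h0 (by rw [h1]; exact one_pos) ?_
    intro i hi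
    exact ⟨aa i, Finset.mem_coe.2 (Finset.mem_image_of_mem aa hi), (haa2 i hi).2⟩

theorem komlos_main {Ω : Type*} [MeasurableSpace Ω] (μ : Measure Ω) [IsProbabilityMeasure μ]
    [μ.IsComplete]
    (C : Set (Ω → ℝ)) (hsub : C ⊆ L0plus μ)
    (hcl : ClosedInMeasure μ C) (hconv : Convex ℝ C)
    (hbd : BoundedInProbability μ C)
    (A : Type) [Preorder A] [Nonempty A] [IsDirected A (· ≤ ·)]
    (x : A → Ω → ℝ) (hx : ∀ α, x α ∈ C) :
    ∃ (B : Type) (_ : Preorder B) (_ : Nonempty B) (_ : IsDirected B (· ≤ ·))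
      (y : B → Ω → ℝ) (z : Ω → ℝ),
      SubnetOfConvexCombinations x y ∧ TendstoInMeasure μ y atTop z ∧ z ∈ C := by
  classical
  -- choose near-maximizers
  have hchoice : ∀ (α : A) (n : ℕ), ∃ g, g ∈ FF μ C x α ∧ cA μ C x α - 1/(n+1) < II μ g := by
    intro α n
    have hne : (II μ '' FF μ C x α).Nonempty :=
      ⟨_, Set.mem_image_of_mem _ (mem_FF_self μ hx α)⟩
    have hlt : cA μ C x α - 1/(n+1) < sSup (II μ '' FF μ C x α) := by
      have hp : (0:ℝ) < 1/((n:ℝ)+1) := by positivity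
      have : cA μ C x α = sSup (II μ '' FF μ C x α) := rfl
      linarith [this]
    obtain ⟨v, hv, hlt'⟩ := exists_lt_of_lt_csSup hne hlt
    obtain ⟨g, hg, rfl⟩ := hv
    exact ⟨g, hg, hlt'⟩
  choose ff hfF hfII using hchoice
  -- key estimates at scales 2⁻¹ ^ k
  have key : ∀ k : ℕ, ∃ (α₀ : A) (N : ℕ), ∀ α α', α₀ ≤ α → α₀ ≤ α' →
      ∀ n n', N ≤ n → N ≤ n' →
      μ {ω | (2⁻¹:ℝ)^k ≤ |ff α n ω - ff α' n' ω|} ≤ ENNReal.ofReal ((2⁻¹:ℝ)^k) :=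
    fun k => key_estimate μ hsub hconv hbd hx hfF hfII (pow_pos (by norm_num) k)
  choose a0 N0 hKey using key
  -- a monotone cofinal-ish sequence of indices
  set βs : ℕ → A := fun k =>
    Nat.rec (a0 0) (fun k ih => (directed_of (· ≤ ·) ih (a0 (k+1))).choose) k with hβsdef
  have hβstep : ∀ k, βs k ≤ βs (k+1) ∧ a0 (k+1) ≤ βs (k+1) := by
    intro k
    exact (directed_of (· ≤ ·) (βs k) (a0 (k+1))).choose_spec
  have hβmono : Monotone βs := monotone_nat_of_le_succ fun k => (hβstep k).1
  have hβa0 : ∀ k, a0 k ≤ βs k := by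
    intro k
    cases k with
    | zero => exact le_rfl
    | succ k => exact (hβstep k).2
  set ns : ℕ → ℕ := fun k => Nat.rec (N0 0) (fun k ih => max ih (N0 (k+1))) k with hnsdef
  have hnstep : ∀ k, ns k ≤ ns (k+1) ∧ N0 (k+1) ≤ ns (k+1) := by
    intro k
    exact ⟨le_max_left _ _, le_max_right _ _⟩
  have hnmono : Monotone ns := monotone_nat_of_le_succ fun k => (hnstep k).1
  have hnN0 : ∀ k, N0 k ≤ ns k := by
    intro k
    cases k with
    | zero => exact le_rfl
    | succ k => exact (hnstep k).2
  set g : ℕ → Ω → ℝ := fun k => ff (βs k) (ns k) with hgdef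
  have hgF : ∀ k, g k ∈ FF μ C x (βs k) := fun k => hfF _ _
  have hgC : ∀ k, g k ∈ C := fun k => (hgF k).1
  have measg : ∀ k, Measurable (g k) := fun k => (hsub (hgC k)).1
  have hgg : ∀ k l, k ≤ l →
      μ {ω | (2⁻¹:ℝ)^k ≤ |g k ω - g l ω|} ≤ ENNReal.ofReal ((2⁻¹:ℝ)^k) := by
    intro k l hkl
    exact hKey k (βs k) (βs l) (hβa0 k) ((hβa0 k).trans (hβmono hkl))
      (ns k) (ns l) (hnN0 k) ((hnN0 k).trans (hnmono hkl))
  -- Borel-Cantelli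
  set S : ℕ → Set Ω := fun k => {ω | (2⁻¹:ℝ)^k ≤ |g k ω - g (k+1) ω|} with hSdef
  have hS : ∀ k, μ (S k) ≤ ENNReal.ofReal ((2⁻¹:ℝ)^k) := fun k => hgg k (k+1) (Nat.le_succ k)
  have hsumS : ∑' k, μ (S k) ≠ ∞ := by
    have h1 : ∑' k, μ (S k) ≤ ∑' k, ENNReal.ofReal ((2⁻¹:ℝ)^k) := ENNReal.tsum_le_tsum hS
    have h2 : ∀ k : ℕ, ENNReal.ofReal ((2⁻¹:ℝ)^k) = (ENNReal.ofReal 2⁻¹)^k := fun k =>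
      ENNReal.ofReal_pow (by norm_num) k
    have h3 : ∑' k : ℕ, (ENNReal.ofReal 2⁻¹)^k = (1 - ENNReal.ofReal 2⁻¹)⁻¹ :=
      ENNReal.tsum_geometric _
    have h4 : ENNReal.ofReal 2⁻¹ < 1 := by
      rw [← ENNReal.ofReal_one]
      exact ENNReal.ofReal_lt_ofReal_iff_of_nonneg (by norm_num) |>.2 (by norm_num)
    have h5 : (1 - ENNReal.ofReal 2⁻¹)⁻¹ ≠ ∞ := by
      rw [ENNReal.inv_ne_top]
      intro h
      exact h4.not_ge (tsub_eq_zero_iff_le.1 h)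
    refine ne_top_of_le_ne_top ?_ h1
    rw [funext h2, h3]
    exact h5
  have hlimsup : μ (limsup S atTop) = 0 := measure_limsup_atTop_eq_zero hsumS
  -- a.e. convergence to a limit z
  have hae : ∀ᵐ ω ∂μ, ∃ l : ℝ, Tendsto (fun k => g k ω) atTop (𝓝 l) := by
    have hstep : ∀ ω, ω ∉ limsup S atTop → ∃ l, Tendsto (fun k => g k ω) atTop (𝓝 l) := by
      intro ω hω
      rw [mem_limsup_iff_frequently_mem, not_frequently] at hω
      obtain ⟨K, hK⟩ := eventually_atTop.1 hω
      have hc : CauchySeq (fun n => g (n + K) ω) := by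
        apply cauchySeq_of_le_geometric 2⁻¹ ((2⁻¹:ℝ)^K) (by norm_num)
        intro n
        have h1 := hK (n + K) (Nat.le_add_left K n)
        simp only [hSdef, Set.mem_setOf_eq, not_le] at h1
        rw [Real.dist_eq]
        have he : n + 1 + K = n + K + 1 := by omega
        rw [he]
        calc |g (n + K) ω - g (n + K + 1) ω| ≤ (2⁻¹:ℝ)^(n+K) := h1.le
          _ = (2⁻¹:ℝ)^K * (2⁻¹:ℝ)^n := by rw [← pow_add]; ring_nf
      obtain ⟨l, hl⟩ := cauchySeq_tendsto_of_complete hc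
      exact ⟨l, (tendsto_add_atTop_iff_nat K).1 hl⟩
    filter_upwards [measure_eq_zero_iff_ae_notMem.1 hlimsup] with ω hω
    exact hstep ω hω
  set z : Ω → ℝ := fun ω =>
    if h : ∃ l : ℝ, Tendsto (fun k => g k ω) atTop (𝓝 l) then h.choose else 0 with hzdef
  have haez : ∀ᵐ ω ∂μ, Tendsto (fun k => g k ω) atTop (𝓝 (z ω)) := by
    filter_upwards [hae] with ω hω
    simp only [hzdef, dif_pos hω]
    exact hω.choose_spec
  have htimg : TendstoInMeasure μ g atTop z :=
    tendstoInMeasure_of_tendsto_ae (fun k => (measg k).aestronglyMeasurable) haez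
  have hzC : z ∈ C := hcl g z hgC htimg
  -- z belongs to every F α
  have hzFF : ∀ α, z ∈ FF μ C x α := by
    intro α
    refine ⟨hzC, ?_⟩
    intro ε hε
    obtain ⟨δ, hδ1, hδ2⟩ :
        ∃ δ : ℕ → A, (∀ k, α ≤ δ k) ∧ (∀ k, βs k ≤ δ k) := by
      have h := fun k => directed_of (· ≤ ·) α (βs k)
      choose δ h1 h2 using h
      exact ⟨δ, h1, h2⟩
    set hh : ℕ → Ω → ℝ := fun k => ff (δ k) (ns k) with hhdef
    have hhF : ∀ k, hh k ∈ FF μ C x α := fun k =>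
      FF_antitone μ C x (hδ1 k) (hfF (δ k) (ns k))
    have hclose : ∀ k, μ {ω | (2⁻¹:ℝ)^k ≤ |hh k ω - g k ω|}
        ≤ ENNReal.ofReal ((2⁻¹:ℝ)^k) := by
      intro k
      exact hKey k (δ k) (βs k) ((hβa0 k).trans (hδ2 k)) (hβa0 k)
        (ns k) (ns k) (hnN0 k) (hnN0 k)
    -- pick k
    have hev1 : ∀ᶠ k in atTop,
        μ {ω | ε/4 ≤ dist (g k ω) (z ω)} < ENNReal.ofReal (ε/4) :=
      (tendstoInMeasure_iff_dist.1 htimg (ε/4) (by linarith)).eventually_lt_const (ENNReal.ofReal_pos.2 (by linarith))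
    have hev2 : ∀ᶠ k in atTop, (2⁻¹:ℝ)^k < ε/4 :=
      (tendsto_pow_atTop_nhds_zero_of_lt_one (by norm_num) (by norm_num)).eventually_lt_const
        (by linarith)
    obtain ⟨k, hk1, hk2⟩ := (hev1.and hev2).exists
    obtain ⟨w, hw, hwb⟩ := (hhF k).2 (ε/2) (by linarith)
    refine ⟨w, hw, ?_⟩
    have hsubset : {ω | ε ≤ |z ω - w ω|}
        ⊆ {ω | ε/4 ≤ |z ω - g k ω|} ∪ {ω | ε/4 ≤ |g k ω - hh k ω|}
          ∪ {ω | ε/2 ≤ |hh k ω - w ω|} := by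
      intro ω hω
      simp only [Set.mem_setOf_eq] at hω
      by_contra hc
      simp only [Set.mem_union, Set.mem_setOf_eq, not_or, not_le] at hc
      have t1 : |z ω - w ω| ≤ |z ω - g k ω| + |g k ω - hh k ω| + |hh k ω - w ω| := by
        calc |z ω - w ω| ≤ |z ω - hh k ω| + |hh k ω - w ω| := abs_sub_le _ _ _
          _ ≤ (|z ω - g k ω| + |g k ω - hh k ω|) + |hh k ω - w ω| := by
              have := abs_sub_le (z ω) (g k ω) (hh k ω)
              linarith
      linarith [hc.1.1, hc.1.2, hc.2]
    have hb1 : μ {ω | ε/4 ≤ |z ω - g k ω|} ≤ ENNReal.ofReal (ε/4) := by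
      have heq : {ω | ε/4 ≤ |z ω - g k ω|} = {ω | ε/4 ≤ dist (g k ω) (z ω)} := by
        ext ω
        rw [Set.mem_setOf_eq, Set.mem_setOf_eq, Real.dist_eq, abs_sub_comm]
      rw [heq]
      exact hk1.le
    have hb2 : μ {ω | ε/4 ≤ |g k ω - hh k ω|} ≤ ENNReal.ofReal (ε/4) := by
      have hsub2 : {ω | ε/4 ≤ |g k ω - hh k ω|} ⊆ {ω | (2⁻¹:ℝ)^k ≤ |hh k ω - g k ω|} := by
        intro ω hω
        simp only [Set.mem_setOf_eq] at hω ⊢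
        rw [abs_sub_comm]
        linarith
      calc μ {ω | ε/4 ≤ |g k ω - hh k ω|} ≤ μ {ω | (2⁻¹:ℝ)^k ≤ |hh k ω - g k ω|} :=
            measure_mono hsub2
        _ ≤ ENNReal.ofReal ((2⁻¹:ℝ)^k) := hclose k
        _ ≤ ENNReal.ofReal (ε/4) := ENNReal.ofReal_le_ofReal hk2.le
    calc μ {ω | ε ≤ |z ω - w ω|}
        ≤ μ ({ω | ε/4 ≤ |z ω - g k ω|} ∪ {ω | ε/4 ≤ |g k ω - hh k ω|}
            ∪ {ω | ε/2 ≤ |hh k ω - w ω|}) := measure_mono hsubset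
      _ ≤ μ ({ω | ε/4 ≤ |z ω - g k ω|} ∪ {ω | ε/4 ≤ |g k ω - hh k ω|})
            + μ {ω | ε/2 ≤ |hh k ω - w ω|} := measure_union_le _ _
      _ ≤ μ {ω | ε/4 ≤ |z ω - g k ω|} + μ {ω | ε/4 ≤ |g k ω - hh k ω|}
            + μ {ω | ε/2 ≤ |hh k ω - w ω|} := add_le_add (measure_union_le _ _) le_rfl
      _ ≤ ENNReal.ofReal (ε/4) + ENNReal.ofReal (ε/4) + ENNReal.ofReal (ε/2) :=
            add_le_add (add_le_add hb1 hb2) hwb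
      _ = ENNReal.ofReal ε := by
            rw [← ENNReal.ofReal_add (by linarith) (by linarith),
              ← ENNReal.ofReal_add (by linarith) (by linarith)]
            congr 1
            ring
  -- the final net
  haveI instD : IsDirected (A × ℕ) (· ≤ ·) := by
    constructor
    rintro ⟨a, m⟩ ⟨b, l⟩
    obtain ⟨c, hc1, hc2⟩ := directed_of (· ≤ ·) a b
    exact ⟨(c, max m l), Prod.mk_le_mk.2 ⟨hc1, le_max_left _ _⟩,
      Prod.mk_le_mk.2 ⟨hc2, le_max_right _ _⟩⟩
  have hyw : ∀ β : A × ℕ, ∃ w, w ∈ convexHull ℝ (x '' {α' | β.1 ≤ α'}) ∧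
      μ {ω | 1/(β.2+1) ≤ |z ω - w ω|} ≤ ENNReal.ofReal (1/(β.2+1)) := by
    intro β
    exact (hzFF β.1).2 (1/(β.2+1)) (by positivity)
  choose y hy1 hy2 using hyw
  have hD : ∀ β : A × ℕ, ∃ D : Finset A, D.Nonempty ∧ ↑D ⊆ {α' | β.1 ≤ α'} ∧
      y β ∈ convexHull ℝ (x '' ↑D) := fun β => mem_convexHull_finset (hy1 β)
  choose D hD1 hD2 hD3 using hD
  refine ⟨A × ℕ, inferInstance, inferInstance, instD, y, z, ?_, ?_, hzC⟩
  · refine ⟨D, hD1, hD3, ?_⟩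
    intro α
    refine ⟨(α, 0), ?_⟩
    intro β' hβ' α' hα'
    have h1 : α ≤ β'.1 := (Prod.mk_le_mk.1 hβ').1
    have h2 : β'.1 ≤ α' := hD2 β' (Finset.mem_coe.2 hα')
    exact h1.trans h2
  · rw [tendstoInMeasure_iff_dist]; intro ε hε
    rw [ENNReal.tendsto_nhds_zero]
    intro ε' hε'
    obtain ⟨N₂, hN₂⟩ : ∃ N₂ : ℕ, ENNReal.ofReal (1/((N₂:ℝ)+1)) ≤ ε' := by
      rcases eq_top_or_lt_top ε' with h | h
      · exact ⟨0, by rw [h]; exact le_top⟩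
      · have h0 : 0 < ε'.toReal := ENNReal.toReal_pos hε'.ne' h.ne
        obtain ⟨n, hn⟩ := exists_nat_one_div_lt h0
        refine ⟨n, ?_⟩
        rw [← ENNReal.ofReal_toReal h.ne]
        exact ENNReal.ofReal_le_ofReal hn.le
    obtain ⟨N₁, hN₁⟩ := exists_nat_one_div_lt hε
    rw [eventually_atTop]
    refine ⟨(Classical.arbitrary A, max N₁ N₂), fun β hβ => ?_⟩
    have hm : max N₁ N₂ ≤ β.2 := (Prod.mk_le_mk.1 hβ).2
    have hm1 : (N₁:ℝ) ≤ β.2 := by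
      have := le_trans (le_max_left N₁ N₂) hm
      exact_mod_cast this
    have hm2 : (N₂:ℝ) ≤ β.2 := by
      have := le_trans (le_max_right N₁ N₂) hm
      exact_mod_cast this
    have hfrac1 : 1/((β.2:ℝ)+1) ≤ 1/((N₁:ℝ)+1) :=
      one_div_le_one_div_of_le (by positivity) (by linarith)
    have hfrac2 : 1/((β.2:ℝ)+1) ≤ 1/((N₂:ℝ)+1) :=
      one_div_le_one_div_of_le (by positivity) (by linarith)
    have hsubset : {ω | ε ≤ dist (y β ω) (z ω)} ⊆ {ω | 1/((β.2:ℝ)+1) ≤ |z ω - y β ω|} := by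
      intro ω hω
      simp only [Set.mem_setOf_eq, Real.dist_eq] at hω ⊢
      rw [abs_sub_comm]
      calc (1:ℝ)/((β.2:ℝ)+1) ≤ 1/((N₁:ℝ)+1) := hfrac1
        _ ≤ ε := hN₁.le
        _ ≤ |y β ω - z ω| := hω
    calc μ {ω | ε ≤ dist (y β ω) (z ω)}
        ≤ μ {ω | 1/((β.2:ℝ)+1) ≤ |z ω - y β ω|} := measure_mono hsubset
      _ ≤ ENNReal.ofReal (1/((β.2:ℝ)+1)) := hy2 β
      _ ≤ ENNReal.ofReal (1/((N₂:ℝ)+1)) := ENNReal.ofReal_le_ofReal hfrac2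
      _ ≤ ε' := hN₂

end KomlosAux

/-- (Komlós-type result in `L0+`.) Let `C` be a closed, convex,
bounded-in-probability subset of `L0+` on a complete probability space. Then every net
in `C` admits a subnet of convex combinations converging in probability to some
element of `C`. -/
theorem exists_convex_combination_subnet_L0plus
    {Ω : Type*} [MeasurableSpace Ω] (μ : Measure Ω) [IsProbabilityMeasure μ]
    [μ.IsComplete]
    (C : Set (Ω → ℝ)) (hsub : C ⊆ L0plus μ)
    (hcl : ClosedInMeasure μ C) (hconv : Convex ℝ C)
    (hbd : BoundedInProbability μ C)
    (A : Type) (_ : Preorder A) (_ : Nonempty A) (_ : IsDirected A (· ≤ ·))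
    (x : A → Ω → ℝ) (hx : ∀ α, x α ∈ C) :
    ∃ (B : Type) (_ : Preorder B) (_ : Nonempty B) (_ : IsDirected B (· ≤ ·))
      (y : B → Ω → ℝ) (z : Ω → ℝ),
      SubnetOfConvexCombinations x y ∧ TendstoInMeasure μ y atTop z ∧ z ∈ C := by
  exact @KomlosAux.komlos_main Ω _ μ _ _ C hsub hcl hconv hbd A
    ‹Preorder A› ‹Nonempty A› ‹IsDirected A (· ≤ ·)› x hx
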